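/- For every real number M > 0 and every (u,v) ∈ ℝ² with u·v < 1, the mixed second partial derivative of log Ω² satisfies ∂_u ∂_v (log Ω²)(u,v) = M·Ω²(u,v)/r(u,v)³; equivalently, the Gauss curvature K = (2/Ω²)·∂_u∂_v log Ω² of the Kruskal plane with metric -Ω² du dv equals 2M/r³, which blows up as r → 0. -/

import Mathlib

/-- The Kruskal relation function `f_M(ρ) = (1 - ρ/(2M))·exp(ρ/(2M))`. -/
noncomputable def fM (M ρ : ℝ) : ℝ := (1 - ρ / (2 * M)) * Real.exp (ρ / (2 * M))

lemma fM_hasDerivAt (M : ℝ) (hM : 0 < M) (ρ : ℝ) :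
    HasDerivAt (fM M) (-(ρ / (4 * M ^ 2)) * Real.exp (ρ / (2 * M))) ρ := by
  have h1 : HasDerivAt (fun x : ℝ => x / (2 * M)) (1 / (2 * M)) ρ := by
    simpa using (hasDerivAt_id ρ).div_const (2 * M)
  have h2 := h1.exp
  have h3 : HasDerivAt (fun x : ℝ => 1 - x / (2 * M)) (-(1 / (2 * M))) ρ :=
    by simpa using h1.const_sub 1
  have h4 := h3.mul h2
  refine h4.congr_deriv ?_
  field_simp
  ring

lemma fM_strictAntiOn (M : ℝ) (hM : 0 < M) : StrictAntiOn (fM M) (Set.Ioi 0) := by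
  apply StrictAntiOn.mono (s := Set.Ici 0) ?_ Set.Ioi_subset_Ici_self
  apply strictAntiOn_of_deriv_neg (convex_Ici 0)
  · exact fun x _ => ((fM_hasDerivAt M hM x).differentiableAt.continuousAt).continuousWithinAt
  · intro x hx
    rw [interior_Ici] at hx
    rw [(fM_hasDerivAt M hM x).deriv]
    have hx0 : (0:ℝ) < x := hx
    have : (0:ℝ) < x / (4 * M ^ 2) := by positivity
    nlinarith [Real.exp_pos (x / (2 * M))]

lemma rM_continuousAt (M : ℝ) (hM : 0 < M) (rM : ℝ → ℝ)
    (hrM : ∀ s : ℝ, s < 1 → 0 < rM s ∧ fM M (rM s) = s)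
    {s : ℝ} (hs : s < 1) : ContinuousAt rM s := by
  have hr0 : 0 < rM s := (hrM s hs).1
  rw [ContinuousAt, tendsto_order]
  constructor
  · intro a ha
    rcases le_or_gt a 0 with h0 | h0
    · filter_upwards [eventually_lt_nhds hs] with s' hs' using lt_of_le_of_lt h0 (hrM s' hs').1
    · have hfa : s < fM M a := by
        rw [← (hrM s hs).2]
        exact fM_strictAntiOn M hM h0 hr0 ha
      filter_upwards [eventually_lt_nhds hs, eventually_lt_nhds hfa] with s' hs' hfas'
      by_contra hle
      push_neg at hle
      have := (fM_strictAntiOn M hM).le_iff_ge (Set.mem_Ioi.2 (hrM s' hs').1) (Set.mem_Ioi.2 h0)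
      have : fM M a ≤ fM M (rM s') := by
        rcases eq_or_lt_of_le hle with h | h
        · rw [h]
        · exact le_of_lt (fM_strictAntiOn M hM (Set.mem_Ioi.2 (hrM s' hs').1) (Set.mem_Ioi.2 h0) h)
      rw [(hrM s' hs').2] at this
      exact absurd hfas' (not_lt.2 this)
  · intro b hb
    have hb0 : 0 < b := lt_trans hr0 hb
    have hfb : fM M b < s := by
      rw [← (hrM s hs).2]
      exact fM_strictAntiOn M hM hr0 hb0 hb
    filter_upwards [eventually_lt_nhds hs, eventually_gt_nhds hfb] with s' hs' hfbs'
    by_contra hle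
    push_neg at hle
    have : fM M (rM s') ≤ fM M b := by
      rcases eq_or_lt_of_le hle with h | h
      · rw [← h]
      · exact le_of_lt (fM_strictAntiOn M hM (Set.mem_Ioi.2 hb0) (Set.mem_Ioi.2 (hrM s' hs').1) h)
    rw [(hrM s' hs').2] at this
    exact absurd hfbs' (not_lt.2 this)

lemma rM_hasDerivAt (M : ℝ) (hM : 0 < M) (rM : ℝ → ℝ)
    (hrM : ∀ s : ℝ, s < 1 → 0 < rM s ∧ fM M (rM s) = s)
    {s : ℝ} (hs : s < 1) :
    HasDerivAt rM (-(4 * M ^ 2) * Real.exp (-(rM s) / (2 * M)) / rM s) s := by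
  have hr0 : 0 < rM s := (hrM s hs).1
  have hf := fM_hasDerivAt M hM (rM s)
  have hne : -(rM s / (4 * M ^ 2)) * Real.exp (rM s / (2 * M)) ≠ 0 := by
    have : (0:ℝ) < rM s / (4 * M ^ 2) := by positivity
    have := Real.exp_pos (rM s / (2 * M))
    nlinarith
  have h := HasDerivAt.of_local_left_inverse (rM_continuousAt M hM rM hrM hs) hf hne
    (by filter_upwards [eventually_lt_nhds hs] with s' hs' using (hrM s' hs').2)
  refine h.congr_deriv ?_
  rw [neg_div, Real.exp_neg]
  have hep := (Real.exp_pos (rM s / (2 * M))).ne'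
  field_simp

/-- The Kruskal radius `r(u,v) = r_M(u·v)`. -/
noncomputable def rK (rM : ℝ → ℝ) (u v : ℝ) : ℝ := rM (u * v)

/-- The conformal factor in Kruskal coordinates:
`Ω²(u,v) = (32M³/r(u,v))·exp(-r(u,v)/(2M))`. -/
noncomputable def Om2K (M : ℝ) (rM : ℝ → ℝ) (u v : ℝ) : ℝ :=
  32 * M ^ 3 / rK rM u v * Real.exp (-(rK rM u v) / (2 * M))

noncomputable def GG (M : ℝ) (rM : ℝ → ℝ) (s : ℝ) : ℝ :=
  Real.exp (-(rM s) / (2 * M)) * (4 * M ^ 2 / (rM s) ^ 2 + 2 * M / rM s)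

lemma inner_deriv (M : ℝ) (hM : 0 < M) (rM : ℝ → ℝ)
    (hrM : ∀ s : ℝ, s < 1 → 0 < rM s ∧ fM M (rM s) = s)
    (u' v : ℝ) (huv : u' * v < 1) :
    HasDerivAt (fun v' : ℝ => Real.log (Om2K M rM u' v')) (u' * GG M rM (u' * v)) v := by
  have hMne : (2 * M) ≠ 0 := by positivity
  -- derivative of v' ↦ rM (u' * v')
  have hmul : HasDerivAt (fun v' : ℝ => u' * v') u' v := by
    simpa using (hasDerivAt_id v).const_mul u'
  have hr : HasDerivAt (fun v' : ℝ => rM (u' * v'))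
      ((-(4 * M ^ 2) * Real.exp (-(rM (u' * v)) / (2 * M)) / rM (u' * v)) * u') v :=
    (rM_hasDerivAt M hM rM hrM huv).comp v hmul
  have hrpos : 0 < rM (u' * v) := (hrM _ huv).1
  -- the simplified form of log Om2K
  have hφ : HasDerivAt (fun v' : ℝ =>
      Real.log (32 * M ^ 3) - Real.log (rM (u' * v')) - rM (u' * v') / (2 * M))
      (0 - ((-(4 * M ^ 2) * Real.exp (-(rM (u' * v)) / (2 * M)) / rM (u' * v)) * u') / rM (u' * v)
        - ((-(4 * M ^ 2) * Real.exp (-(rM (u' * v)) / (2 * M)) / rM (u' * v)) * u') / (2 * M)) v := by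
    exact (((hasDerivAt_const v (Real.log (32 * M ^ 3))).sub (hr.log hrpos.ne')).sub
      (hr.div_const (2 * M)))
  have heq : (fun v' : ℝ => Real.log (Om2K M rM u' v')) =ᶠ[nhds v]
      (fun v' : ℝ => Real.log (32 * M ^ 3) - Real.log (rM (u' * v')) - rM (u' * v') / (2 * M)) := by
    have hopen : ∀ᶠ v' in nhds v, u' * v' < 1 := by
      have : Continuous (fun v' : ℝ => u' * v') := by continuity
      exact this.continuousAt.eventually_lt continuousAt_const huv
    filter_upwards [hopen] with v' hv'
    have hrp : 0 < rM (u' * v') := (hrM _ hv').1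
    have h32 : (0:ℝ) < 32 * M ^ 3 := by positivity
    rw [Om2K, rK, Real.log_mul (by positivity) (Real.exp_pos _).ne', Real.log_div h32.ne' hrp.ne',
      Real.log_exp]
    ring
  have := hφ.congr_of_eventuallyEq heq
  refine this.congr_deriv ?_
  simp only [GG]
  field_simp
  ring

lemma GG_hasDerivAt (M : ℝ) (hM : 0 < M) (rM : ℝ → ℝ)
    (hrM : ∀ s : ℝ, s < 1 → 0 < rM s ∧ fM M (rM s) = s)
    {s : ℝ} (hs : s < 1) :
    HasDerivAt (GG M rM)
      (4 * M ^ 2 * (Real.exp (-(rM s) / (2 * M)) * Real.exp (-(rM s) / (2 * M))) *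
        (8 * M ^ 2 / (rM s) ^ 4 + 4 * M / (rM s) ^ 3 + 1 / (rM s) ^ 2)) s := by
  have hrpos : 0 < rM s := (hrM s hs).1
  set r := rM s with hrdef
  have h1 : HasDerivAt (fun x : ℝ => -x / (2 * M)) (-1 / (2 * M)) r := by
    simpa [neg_div] using ((hasDerivAt_id r).neg.div_const (2 * M))
  have h1e := h1.exp
  have h2 : HasDerivAt (fun x : ℝ => 4 * M ^ 2 / x ^ 2)
      ((0 * r ^ 2 - 4 * M ^ 2 * (2 * r ^ 1)) / (r ^ 2) ^ 2) r :=
    (hasDerivAt_const r (4 * M ^ 2)).div (hasDerivAt_pow 2 r) (by positivity)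
  have h3 : HasDerivAt (fun x : ℝ => 2 * M / x)
      ((0 * r - 2 * M * 1) / r ^ 2) r :=
    (hasDerivAt_const r (2 * M)).div (hasDerivAt_id r) hrpos.ne'
  have hH := h1e.mul (h2.add h3)
  have hG : HasDerivAt (GG M rM)
      ((Real.exp (-r / (2 * M)) * (-1 / (2 * M)) * (4 * M ^ 2 / r ^ 2 + 2 * M / r) +
        Real.exp (-r / (2 * M)) *
          ((0 * r ^ 2 - 4 * M ^ 2 * (2 * r ^ 1)) / (r ^ 2) ^ 2 + (0 * r - 2 * M * 1) / r ^ 2)) *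
        (-(4 * M ^ 2) * Real.exp (-r / (2 * M)) / r)) s :=
    hH.comp s (rM_hasDerivAt M hM rM hrM hs)
  convert hG using 1
  field_simp
  ring

/-- For every `M > 0` and `(u,v)` with `u·v < 1`, the mixed second partial derivative of
`log Ω²` satisfies `∂_u ∂_v (log Ω²) = M·Ω²/r³`; equivalently, the Gauss curvature
`K = (2/Ω²)·∂_u∂_v log Ω²` of the Kruskal plane with metric `-Ω² du dv` equals `2M/r³`. -/
theorem gauss_curvature_kruskal_plane (M : ℝ) (hM : 0 < M) (rM : ℝ → ℝ)
    (hrM : ∀ s : ℝ, s < 1 → 0 < rM s ∧ fM M (rM s) = s)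
    (u v : ℝ) (huv : u * v < 1) :
    deriv (fun u' : ℝ => deriv (fun v' : ℝ => Real.log (Om2K M rM u' v')) v) u =
        M * Om2K M rM u v / (rK rM u v) ^ 3 ∧
      (2 / Om2K M rM u v) *
          deriv (fun u' : ℝ => deriv (fun v' : ℝ => Real.log (Om2K M rM u' v')) v) u =
        2 * M / (rK rM u v) ^ 3 := by
  have hrpos : 0 < rM (u * v) := (hrM _ huv).1
  have hOm2pos : 0 < Om2K M rM u v := by
    rw [Om2K, rK]
    positivity
  -- the map u' ↦ inner deriv eventually equals u' ↦ u' * GG M rM (u' * v)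
  have heq : (fun u' : ℝ => deriv (fun v' : ℝ => Real.log (Om2K M rM u' v')) v) =ᶠ[nhds u]
      (fun u' : ℝ => u' * GG M rM (u' * v)) := by
    have hopen : ∀ᶠ u' in nhds u, u' * v < 1 :=
      ((continuous_id.mul continuous_const).continuousAt (x := u)).eventually_lt
        continuousAt_const huv
    filter_upwards [hopen] with u' hu'
    exact (inner_deriv M hM rM hrM u' v hu').deriv
  -- derivative of u' ↦ u' * GG M rM (u' * v)
  have hGv : HasDerivAt (fun u' : ℝ => GG M rM (u' * v))
      ((4 * M ^ 2 * (Real.exp (-(rM (u * v)) / (2 * M)) * Real.exp (-(rM (u * v)) / (2 * M))) *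
        (8 * M ^ 2 / (rM (u * v)) ^ 4 + 4 * M / (rM (u * v)) ^ 3 + 1 / (rM (u * v)) ^ 2)) * v) u :=
    by have h := (GG_hasDerivAt M hM rM hrM huv).comp u (by simpa using (hasDerivAt_id u).mul_const v : HasDerivAt (fun u' : ℝ => u' * v) v u); exact h
  have hout : HasDerivAt (fun u' : ℝ => u' * GG M rM (u' * v))
      (1 * GG M rM (u * v) + u *
        ((4 * M ^ 2 * (Real.exp (-(rM (u * v)) / (2 * M)) * Real.exp (-(rM (u * v)) / (2 * M))) *
          (8 * M ^ 2 / (rM (u * v)) ^ 4 + 4 * M / (rM (u * v)) ^ 3 + 1 / (rM (u * v)) ^ 2)) * v)) u :=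
    (hasDerivAt_id u).mul hGv
  have hderiv : deriv (fun u' : ℝ => deriv (fun v' : ℝ => Real.log (Om2K M rM u' v')) v) u =
      1 * GG M rM (u * v) + u *
        ((4 * M ^ 2 * (Real.exp (-(rM (u * v)) / (2 * M)) * Real.exp (-(rM (u * v)) / (2 * M))) *
          (8 * M ^ 2 / (rM (u * v)) ^ 4 + 4 * M / (rM (u * v)) ^ 3 + 1 / (rM (u * v)) ^ 2)) * v) := by
    rw [heq.deriv_eq]
    exact hout.deriv
  -- final algebra
  have hfe : u * v = (1 - rM (u * v) / (2 * M)) * Real.exp (rM (u * v) / (2 * M)) :=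
    ((hrM _ huv).2).symm
  have hEE : Real.exp (-(rM (u * v)) / (2 * M)) * Real.exp (rM (u * v) / (2 * M)) = 1 := by
    rw [← Real.exp_add]; ring_nf; exact Real.exp_zero
  have key : deriv (fun u' : ℝ => deriv (fun v' : ℝ => Real.log (Om2K M rM u' v')) v) u =
      M * Om2K M rM u v / (rK rM u v) ^ 3 := by
    rw [hderiv, Om2K, rK, GG, neg_div, Real.exp_neg]
    set r := rM (u * v) with hrdef
    set F := Real.exp (r / (2 * M)) with hFdef
    have hFne : F ≠ 0 := (Real.exp_pos _).ne'
    have huv' : u * v = (1 - r / (2 * M)) * F := hfe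
    rw [mul_comm u (_ * v), mul_assoc, mul_comm v u, huv']
    field_simp
    ring
  refine ⟨key, ?_⟩
  rw [key]
  have hrK : (0:ℝ) < rK rM u v := by rw [rK]; exact hrpos
  field_simp
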